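/- Let G be a Banach Lie group with Lie algebra 𝔤 acting smoothly on the right on a Banach manifold M, and assume evolutions Evol(γ) exist for all γ ∈ L¹([0,T], 𝔤) and evol : L¹([0,T], 𝔤) → G is continuous. Let S ⊆ 𝔤 be nonempty, x₀ ∈ M, T > 0, and U ⊆ M open. If there exists γ ∈ L¹([0,T], 𝔤) with image in S such that x₀.evol(γ) ∈ U, then there exists a staircase function η : [0,T] → 𝔤 with image in S such that x₀.evol(η) ∈ U. -/

import Mathlib

open MeasureTheory
open scoped Manifold

section

/-- A staircase function on `[a,b]`: constant on the open subintervals of some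
finite partition `a = t₀ < t₁ < ⋯ < tₙ = b`. -/
def IsStaircaseOn {E : Type*} (a b : ℝ) (η : ℝ → E) : Prop :=
  ∃ (n : ℕ) (t : Fin (n + 1) → ℝ), StrictMono t ∧ t 0 = a ∧ t (Fin.last n) = b ∧
    ∀ i : Fin n, ∃ c : E, ∀ x ∈ Set.Ioo (t i.castSucc) (t i.succ), η x = c

/-- `g : [c,d] → X` is absolutely continuous: it is the indefinite Bochner
integral of an integrable function. -/
def BanachACOn {X : Type*} [NormedAddCommGroup X] [NormedSpace ℝ X]
    (g : ℝ → X) (c d : ℝ) : Prop :=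
  ∃ γ : ℝ → X, IntegrableOn γ (Set.Icc c d) ∧
    ∀ t ∈ Set.Icc c d, g t = g c + ∫ s in c..t, γ s

/-- A curve `ζ : [a,b] → N` into a Banach manifold is absolutely continuous:
it is continuous and, locally in charts, absolutely continuous. -/
def MfdACOn {X : Type*} [NormedAddCommGroup X] [NormedSpace ℝ X]
    {N : Type*} [TopologicalSpace N] [ChartedSpace X N]
    (ζ : ℝ → N) (a b : ℝ) : Prop :=
  ContinuousOn ζ (Set.Icc a b) ∧
  ∀ t₀ ∈ Set.Icc a b, ∃ c d : ℝ, c < d ∧ t₀ ∈ Set.Icc c d ∧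
    Set.Icc c d ⊆ Set.Icc a b ∧ Set.Icc c d ∈ nhdsWithin t₀ (Set.Icc a b) ∧
    (∀ t ∈ Set.Icc c d, ζ t ∈ (extChartAt 𝓘(ℝ, X) (ζ t₀)).source) ∧
    BanachACOn (fun t => extChartAt 𝓘(ℝ, X) (ζ t₀) (ζ t)) c d

variable {E : Type*} [NormedAddCommGroup E] [NormedSpace ℝ E] [CompleteSpace E]
  {G : Type*} [TopologicalSpace G] [ChartedSpace E G] [Group G]
  [LieGroup 𝓘(ℝ, E) (⊤ : ℕ∞) G]

/-- `η` is the (Carathéodory) evolution of the `L¹`-curve `γ` on `[a,b]`. -/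
def IsL1EvolutionOn (η : ℝ → G) (γ : ℝ → E) (a b : ℝ) : Prop :=
  η a = 1 ∧ MfdACOn (X := E) η a b ∧
  ∀ᵐ t ∂volume, t ∈ Set.Icc a b →
    MDifferentiableAt 𝓘(ℝ, ℝ) 𝓘(ℝ, E) η t ∧
    (mfderiv 𝓘(ℝ, ℝ) 𝓘(ℝ, E) η t (1 : ℝ) : E) =
      (mfderiv 𝓘(ℝ, E) 𝓘(ℝ, E) (fun h : G => η t * h) 1 (γ t) : E)

variable {F : Type*} [NormedAddCommGroup F] [NormedSpace ℝ F] [CompleteSpace F]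
  {M : Type*} [TopologicalSpace M] [ChartedSpace F M]

lemma exists_point_le_of_setIntegral_lt {g : ℝ → ℝ} {a b c : ℝ} (hab : a < b)
    (hg : IntegrableOn g (Set.Ioc a b))
    (hc : (∫ t in Set.Ioc a b, g t) < c * (b - a)) :
    ∃ s ∈ Set.Icc a b, g s ≤ c := by
  by_contra h
  push_neg at h
  have hmono : (∫ _t in Set.Ioc a b, (c : ℝ)) ≤ ∫ t in Set.Ioc a b, g t :=
    setIntegral_mono_on (integrableOn_const measure_Ioc_lt_top.ne) hg
      measurableSet_Ioc (fun x hx => (h x ⟨hx.1.le, hx.2⟩).le)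
  rw [setIntegral_const, measureReal_def, Real.volume_Ioc, ENNReal.toReal_ofReal (by linarith),
    smul_eq_mul] at hmono
  nlinarith

lemma staircase_approx {E : Type*} [NormedAddCommGroup E] [NormedSpace ℝ E]
    (T ε : ℝ) (hT : 0 < T) (hε : 0 < ε) (γ : ℝ → E)
    (hγ : IntegrableOn γ (Set.Icc 0 T)) :
    ∃ η : ℝ → E, IsStaircaseOn 0 T η ∧ η '' Set.Icc 0 T ⊆ γ '' Set.Icc 0 T ∧
      IntegrableOn η (Set.Icc 0 T) ∧ (∫ t in Set.Icc 0 T, ‖γ t - η t‖) < ε := by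
  -- continuous approximation
  have hγind : Integrable ((Set.Icc (0:ℝ) T).indicator γ) :=
    (integrable_indicator_iff measurableSet_Icc).2 hγ
  obtain ⟨f, hfsupp, hfapprox, hfcont, hfint⟩ :=
    hγind.exists_hasCompactSupport_integral_sub_le (by positivity : (0:ℝ) < ε/8)
  set g : ℝ → ℝ := fun t => ‖γ t - f t‖ with hg_def
  have hgint : IntegrableOn g (Set.Icc 0 T) := (hγ.sub hfint.integrableOn).norm
  set A : ℝ := ∫ t in Set.Icc 0 T, g t with hA_def
  have hA : A ≤ ε / 8 := by
    have h1 : A = ∫ t in Set.Icc 0 T, ‖(Set.Icc (0:ℝ) T).indicator γ t - f t‖ := by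
      refine setIntegral_congr_fun measurableSet_Icc (fun x hx => ?_)
      simp [hg_def, Set.indicator_of_mem hx]
    have h2 : (∫ t in Set.Icc 0 T, ‖(Set.Icc (0:ℝ) T).indicator γ t - f t‖) ≤
        ∫ t, ‖(Set.Icc (0:ℝ) T).indicator γ t - f t‖ :=
      setIntegral_le_integral (hγind.sub hfint).norm
        (Filter.Eventually.of_forall fun x => norm_nonneg _)
    linarith
  -- uniform continuity
  set ε4 : ℝ := ε / (4 * T) with hε4_def
  have hε4 : 0 < ε4 := by positivity
  obtain ⟨δ, hδ, hfδ⟩ := Metric.uniformContinuous_iff.1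
    (hfsupp.uniformContinuous_of_continuous hfcont) ε4 hε4
  -- partition
  obtain ⟨m, hm⟩ := exists_nat_gt (T / δ)
  set n : ℕ := m + 1 with hn_def
  have hn0 : 0 < n := Nat.succ_pos m
  set L : ℝ := T / n with hL_def
  have hL : 0 < L := by positivity
  have hLδ : L < δ := by
    rw [hL_def, div_lt_iff₀ (by positivity)]
    have h : T / δ < (n : ℝ) := lt_of_lt_of_le hm (by exact_mod_cast Nat.le_succ m)
    calc T = (T / δ) * δ := by field_simp
    _ < (n : ℝ) * δ := mul_lt_mul_of_pos_right h hδ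
    _ = δ * n := mul_comm _ _
  have hnL : (n : ℝ) * L = T := by rw [hL_def]; field_simp
  set tt : ℕ → ℝ := fun k => (k : ℝ) * L with htt_def
  have htt_succ : ∀ k : ℕ, tt (k + 1) - tt k = L := by
    intro k; simp only [htt_def]; push_cast; ring
  have htt_lt : ∀ k : ℕ, tt k < tt (k + 1) := by
    intro k; have := htt_succ k; linarith
  have htt_mono : Monotone tt := monotone_nat_of_le_succ (fun k => (htt_lt k).le)
  have httn : tt n = T := by simp only [htt_def]; exact hnL
  have htt_sub : ∀ k : ℕ, k < n → Set.Icc (tt k) (tt (k + 1)) ⊆ Set.Icc 0 T := by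
    intro k hk x hx
    constructor
    · have : (0:ℝ) ≤ tt k := by simp only [htt_def]; positivity
      linarith [hx.1]
    · have : tt (k + 1) ≤ tt n := htt_mono (by omega)
      linarith [hx.2, httn ▸ this]
  -- choice of good points
  set B : ℕ → ℝ := fun k => ∫ t in Set.Ioc (tt k) (tt (k + 1)), g t with hB_def
  have hgpiece : ∀ k : ℕ, k < n → IntegrableOn g (Set.Ioc (tt k) (tt (k + 1))) := by
    intro k hk
    exact hgint.mono_set ((Set.Ioc_subset_Icc_self).trans (htt_sub k hk))
  have hpt : ∀ k : ℕ, ∃ s ∈ Set.Icc (tt k) (tt (k + 1)), k < n → g s ≤ B k / L + ε4 := by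
    intro k
    by_cases hk : k < n
    · have hlt : (∫ t in Set.Ioc (tt k) (tt (k + 1)), g t) < (B k / L + ε4) * (tt (k+1) - tt k) := by
        rw [htt_succ k]
        have hBL : (B k / L + ε4) * L = B k + ε4 * L := by field_simp
        rw [hBL]; nlinarith
      obtain ⟨s, hs1, hs2⟩ := exists_point_le_of_setIntegral_lt (htt_lt k) (hgpiece k hk) hlt
      exact ⟨s, hs1, fun _ => hs2⟩
    · exact ⟨tt k, ⟨le_refl _, (htt_lt k).le⟩, fun h => absurd h hk⟩
  choose s hs1 hs2 using hpt
  have hsIcc : ∀ k : ℕ, k < n → s k ∈ Set.Icc 0 T := fun k hk => htt_sub k hk (hs1 k)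
  -- the staircase function
  set η : ℝ → E := fun x => γ (s (min (n - 1) ⌊x / L⌋₊)) with hη_def
  have hidx_lt : ∀ x : ℝ, min (n - 1) ⌊x / L⌋₊ < n := fun x => by omega
  have hηval : ∀ k : ℕ, k < n → ∀ x ∈ Set.Ioo (tt k) (tt (k + 1)), η x = γ (s k) := by
    intro k hk x hx
    have hx0 : (0:ℝ) ≤ x := by
      have : (0:ℝ) ≤ tt k := by simp only [htt_def]; positivity
      linarith [hx.1]
    have hx1 : (k : ℝ) < x / L := by
      rw [lt_div_iff₀ hL]; simpa [htt_def] using hx.1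
    have hx2 : x / L < (k : ℝ) + 1 := by
      rw [div_lt_iff₀ hL]
      have := hx.2; simp only [htt_def] at this; push_cast at this ⊢; linarith
    have hfloor : ⌊x / L⌋₊ = k := by
      rw [Nat.floor_eq_iff (div_nonneg hx0 hL.le)]
      exact ⟨hx1.le, by exact_mod_cast hx2⟩
    have hmin : min (n - 1) ⌊x / L⌋₊ = k := by rw [hfloor]; omega
    show γ (s (min (n - 1) ⌊x / L⌋₊)) = γ (s k)
    rw [hmin]
  -- integrability of η
  have hcover : Set.Icc (0:ℝ) T ⊆ (⋃ k ∈ Finset.range (n+1), ({tt k} : Set ℝ)) ∪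
      ⋃ k ∈ Finset.range n, Set.Ioo (tt k) (tt (k + 1)) := by
    intro x hx
    by_cases hxT : x = T
    · exact Or.inl (Set.mem_biUnion (Finset.self_mem_range_succ n) (by simp [hxT, httn]))
    · have hx0 : (0:ℝ) ≤ x := hx.1
      have hxT' : x < T := lt_of_le_of_ne hx.2 hxT
      set k := ⌊x / L⌋₊ with hk_def
      have hkn : k < n := by
        have : x / L < (n : ℝ) := by
          rw [div_lt_iff₀ hL]; rw [← hnL] at hxT'; linarith
        exact_mod_cast Nat.floor_lt (div_nonneg hx0 hL.le) |>.2 this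
      have hlow : tt k ≤ x := by
        have : (k : ℝ) ≤ x / L := Nat.floor_le (div_nonneg hx0 hL.le)
        simp only [htt_def]
        calc (k:ℝ) * L ≤ (x / L) * L := by nlinarith
        _ = x := by field_simp
      have hhigh : x < tt (k + 1) := by
        have : x / L < (k : ℝ) + 1 := Nat.lt_floor_add_one (x / L)
        simp only [htt_def]; push_cast
        calc x = (x / L) * L := by field_simp
        _ < ((k:ℝ) + 1) * L := by nlinarith
      by_cases hxk : x = tt k
      · refine Or.inl (Set.mem_biUnion (x := k) (show k ∈ Finset.range (n+1) from Finset.mem_range.2 (by omega)) ?_)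
        simp [hxk]
      · exact Or.inr (Set.mem_biUnion (Finset.mem_range.2 hkn)
          ⟨lt_of_le_of_ne hlow (Ne.symm hxk), hhigh⟩)
  have hηint : IntegrableOn η (Set.Icc 0 T) := by
    refine IntegrableOn.mono_set ?_ hcover
    refine IntegrableOn.union ?_ ?_
    · rw [integrableOn_finset_iUnion]
      intro k _
      rw [IntegrableOn, Measure.restrict_eq_zero.2 (by simp)]
      exact integrable_zero_measure
    · rw [integrableOn_finset_iUnion]
      intro k hk
      refine IntegrableOn.congr_fun (f := fun _ => γ (s k)) ?_ ?_ measurableSet_Ioo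
      · exact integrableOn_const measure_Ioo_lt_top.ne
      · exact fun x hx => (hηval k (Finset.mem_range.1 hk) x hx).symm
  -- per-piece estimate
  have hGH0 : IntegrableOn (fun t => ‖γ t - η t‖) (Set.Icc 0 T) := (hγ.sub hηint).norm
  have hGHpiece : ∀ k : ℕ, k < n →
      IntegrableOn (fun t => ‖γ t - η t‖) (Set.Ioc (tt k) (tt (k + 1))) := fun k hk =>
    hGH0.mono_set ((Set.Ioc_subset_Icc_self).trans (htt_sub k hk))
  set P : ℕ → ℝ := fun k => ∫ t in Set.Ioc (tt k) (tt (k + 1)), ‖γ t - η t‖ with hP_def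
  have hP : ∀ k : ℕ, k < n → P k ≤ 2 * B k + L * (2 * ε4) := by
    intro k hk
    have hae : ∀ᵐ t ∂(volume.restrict (Set.Ioc (tt k) (tt (k + 1)))),
        ‖γ t - η t‖ ≤ g t + (B k / L + 2 * ε4) := by
      have h1 : ∀ᵐ t ∂(volume.restrict (Set.Ioc (tt k) (tt (k + 1)))),
          t ∈ Set.Ioc (tt k) (tt (k + 1)) := ae_restrict_mem measurableSet_Ioc
      have h2' : ∀ᵐ t : ℝ ∂volume, t ≠ tt (k + 1) := by
        refine ae_iff.2 ?_
        have : {t : ℝ | ¬ t ≠ tt (k + 1)} = {tt (k + 1)} := by ext y; simp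
        rw [this]; exact measure_singleton _
      filter_upwards [h1, ae_restrict_of_ae h2'] with t ht hne
      have htIoo : t ∈ Set.Ioo (tt k) (tt (k + 1)) := ⟨ht.1, lt_of_le_of_ne ht.2 hne⟩
      rw [hηval k hk t htIoo]
      have hdist : dist t (s k) < δ := by
        have hsk := hs1 k
        have h1' := htIoo.1; have h2'' := htIoo.2.le
        rw [Real.dist_eq, abs_sub_lt_iff]
        constructor
        · have : tt (k+1) - tt k = L := htt_succ k
          have := hsk.1; linarith
        · have : tt (k+1) - tt k = L := htt_succ k
          have := hsk.2; linarith
      have e2 : dist (f t) (f (s k)) ≤ ε4 := (hfδ hdist).le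
      have e3 : dist (f (s k)) (γ (s k)) ≤ B k / L + ε4 := by
        rw [dist_comm, dist_eq_norm]; exact hs2 k hk
      calc ‖γ t - γ (s k)‖ = dist (γ t) (γ (s k)) := (dist_eq_norm _ _).symm
      _ ≤ dist (γ t) (f t) + dist (f t) (f (s k)) + dist (f (s k)) (γ (s k)) :=
          dist_triangle4 _ _ _ _
      _ ≤ g t + ε4 + (B k / L + ε4) := by
          rw [dist_eq_norm]; exact add_le_add (add_le_add le_rfl e2) e3
      _ = g t + (B k / L + 2 * ε4) := by ring
    have hint2 : IntegrableOn (fun t => g t + (B k / L + 2 * ε4))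
        (Set.Ioc (tt k) (tt (k + 1))) :=
      (hgpiece k hk).add (integrableOn_const measure_Ioc_lt_top.ne)
    have hle := integral_mono_ae (hGHpiece k hk) hint2 hae
    rw [integral_add (hgpiece k hk) (integrableOn_const measure_Ioc_lt_top.ne)] at hle
    have hconst : (∫ _t in Set.Ioc (tt k) (tt (k + 1)), (B k / L + 2 * ε4)) =
        L * (B k / L + 2 * ε4) := by
      rw [setIntegral_const, measureReal_def, Real.volume_Ioc, htt_succ k, ENNReal.toReal_ofReal hL.le,
        smul_eq_mul]
    rw [hconst] at hle
    have : L * (B k / L + 2 * ε4) = B k + L * (2 * ε4) := by field_simp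
    rw [this] at hle
    simp only [hP_def]
    linarith
  -- summing up
  have hIIγη : ∀ k : ℕ, k < n → IntervalIntegrable (fun t => ‖γ t - η t‖) volume (tt k) (tt (k+1)) :=
    fun k hk => (intervalIntegrable_iff_integrableOn_Ioc_of_le (htt_lt k).le).2 (hGHpiece k hk)
  have hIIg : ∀ k : ℕ, k < n → IntervalIntegrable g volume (tt k) (tt (k+1)) :=
    fun k hk => (intervalIntegrable_iff_integrableOn_Ioc_of_le (htt_lt k).le).2 (hgpiece k hk)
  have htt0 : tt 0 = 0 := by simp [htt_def]
  have hsum1 : (∑ k ∈ Finset.range n, P k) = ∫ t in Set.Ioc (0:ℝ) T, ‖γ t - η t‖ := by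
    calc (∑ k ∈ Finset.range n, P k)
        = ∑ k ∈ Finset.range n, ∫ x in (tt k)..(tt (k+1)), ‖γ x - η x‖ :=
          Finset.sum_congr rfl (fun k hk => (intervalIntegral.integral_of_le (htt_lt k).le).symm)
      _ = ∫ x in (tt 0)..(tt n), ‖γ x - η x‖ :=
          intervalIntegral.sum_integral_adjacent_intervals (fun k hk => hIIγη k hk)
      _ = ∫ x in (0:ℝ)..T, ‖γ x - η x‖ := by rw [htt0, httn]
      _ = ∫ t in Set.Ioc (0:ℝ) T, ‖γ t - η t‖ := intervalIntegral.integral_of_le hT.le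
  have hsum2 : (∑ k ∈ Finset.range n, B k) = ∫ t in Set.Ioc (0:ℝ) T, g t := by
    calc (∑ k ∈ Finset.range n, B k)
        = ∑ k ∈ Finset.range n, ∫ x in (tt k)..(tt (k+1)), g x :=
          Finset.sum_congr rfl (fun k hk => (intervalIntegral.integral_of_le (htt_lt k).le).symm)
      _ = ∫ x in (tt 0)..(tt n), g x :=
          intervalIntegral.sum_integral_adjacent_intervals (fun k hk => hIIg k hk)
      _ = ∫ x in (0:ℝ)..T, g x := by rw [htt0, httn]
      _ = ∫ t in Set.Ioc (0:ℝ) T, g t := intervalIntegral.integral_of_le hT.le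
  have hIocIcc1 : (∫ t in Set.Ioc (0:ℝ) T, ‖γ t - η t‖) = ∫ t in Set.Icc (0:ℝ) T, ‖γ t - η t‖ :=
    (integral_Icc_eq_integral_Ioc).symm
  have hIocIcc2 : (∫ t in Set.Ioc (0:ℝ) T, g t) = A := (integral_Icc_eq_integral_Ioc).symm
  have hfinal : (∫ t in Set.Icc 0 T, ‖γ t - η t‖) < ε := by
    have hsumle : (∑ k ∈ Finset.range n, P k) ≤ ∑ k ∈ Finset.range n, (2 * B k + L * (2 * ε4)) :=
      Finset.sum_le_sum (fun k hk => hP k (Finset.mem_range.1 hk))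
    have hsumrhs : (∑ k ∈ Finset.range n, (2 * B k + L * (2 * ε4))) =
        2 * (∑ k ∈ Finset.range n, B k) + (n : ℝ) * (L * (2 * ε4)) := by
      rw [Finset.sum_add_distrib, Finset.mul_sum, Finset.sum_const, Finset.card_range,
        nsmul_eq_mul]
    have hεT : (n : ℝ) * (L * (2 * ε4)) = ε / 2 := by
      rw [← mul_assoc, hnL, hε4_def]; field_simp; ring
    rw [← hIocIcc1, ← hsum1]
    calc (∑ k ∈ Finset.range n, P k) ≤ 2 * (∑ k ∈ Finset.range n, B k) + (n:ℝ) * (L * (2*ε4)) := by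
          rw [← hsumrhs]; exact hsumle
    _ = 2 * A + ε / 2 := by rw [hsum2, hIocIcc2, hεT]
    _ ≤ 2 * (ε/8) + ε/2 := by linarith
    _ < ε := by linarith
  exact ⟨η, ⟨n, fun i => tt (i : ℕ), by
      intro i j hij
      exact lt_of_lt_of_le (htt_lt i) (htt_mono (by exact_mod_cast hij)),
      by simpa using htt0, by simpa using httn,
      fun i => ⟨γ (s i), fun x hx => hηval i i.isLt x
        (by simpa [Fin.coe_castSucc, Fin.val_succ] using hx)⟩⟩,
    by rintro y ⟨x, _, rfl⟩; exact ⟨s (min (n - 1) ⌊x / L⌋₊), hsIcc _ (hidx_lt x), rfl⟩,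
    hηint, hfinal⟩

/-- Reachability of a neighbourhood with `L¹`-controls in `S` implies
reachability with staircase controls in `S`: here `evol` assigns to each
`L¹`-curve `γ : [0,T] → 𝔤` the endpoint of its evolution and is assumed to be
continuous for the `L¹`-topology. -/
theorem exists_staircase_control_of_L1_control
    (σ : M → G → M)
    (hσ : ContMDiff (𝓘(ℝ, F).prod 𝓘(ℝ, E)) 𝓘(ℝ, F) (⊤ : ℕ∞)
      (fun p : M × G => σ p.1 p.2))
    (hone : ∀ x : M, σ x 1 = x)
    (hmul : ∀ (x : M) (g h : G), σ x (g * h) = σ (σ x g) h)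
    (T : ℝ) (hT : 0 < T)
    (evol : (ℝ → E) → G)
    (hevol : ∀ γ : ℝ → E, IntegrableOn γ (Set.Icc 0 T) →
      ∃ η : ℝ → G, IsL1EvolutionOn η γ 0 T ∧ evol γ = η T)
    (hcont : ∀ γ : ℝ → E, IntegrableOn γ (Set.Icc 0 T) →
      ∀ V ∈ nhds (evol γ), ∃ ε > (0 : ℝ), ∀ γ' : ℝ → E,
        IntegrableOn γ' (Set.Icc 0 T) →
        (∫ t in Set.Icc 0 T, ‖γ t - γ' t‖) < ε → evol γ' ∈ V)
    (S : Set E) (hS : S.Nonempty) (x₀ : M) (U : Set M) (hU : IsOpen U)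
    (γ : ℝ → E) (hγ : IntegrableOn γ (Set.Icc 0 T))
    (hγS : γ '' Set.Icc 0 T ⊆ S) (hreach : σ x₀ (evol γ) ∈ U) :
    ∃ η : ℝ → E, IsStaircaseOn 0 T η ∧ η '' Set.Icc 0 T ⊆ S ∧
      σ x₀ (evol η) ∈ U := by
  have hφ : Continuous fun g : G => σ x₀ g :=
    hσ.continuous.comp (Continuous.prodMk_right x₀)
  have hV : IsOpen ((fun g : G => σ x₀ g) ⁻¹' U) := hU.preimage hφ
  obtain ⟨ε, hε, hclose⟩ := hcont γ hγ _ (hV.mem_nhds hreach)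
  obtain ⟨η, hst, him, hint, hlt⟩ := staircase_approx T ε hT hε γ hγ
  exact ⟨η, hst, him.trans hγS, hclose η hint hlt⟩

end
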